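/- Let ρ satisfy (A3) and suppose g satisfies (A4), and let 0 < b < 1. If 0 < c ≤ 1/K, then B_CM(ε) = B_S(ε) for every ε ∈ (0, b). -/

import Mathlib

open MeasureTheory ProbabilityTheory Filter Set

/-- Theorem 6.1(i): Under (A3) and (A4), if 0 < c ≤ 1/K then
B_CM(ε) = B_S(ε) for every ε ∈ (0, b). -/
theorem stmt9 (ρ : ℝ → ℝ)
    (hρ_meas : Measurable ρ)
    (hρ_even : ∀ u, ρ (-u) = ρ u)
    (hρ_mono : MonotoneOn ρ (Set.Ici 0))
    (hρ_zero : ρ 0 = 0)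
    (hρ_bdd : ∀ u, 0 ≤ ρ u ∧ ρ u ≤ 1)
    (hρ_lim : Tendsto ρ atTop (nhds 1))
    (g : ℝ → ℝ)
    (hg : ∀ s, 0 < s → g s = ∫ z, ρ (z / s) ∂(gaussianReal 0 1))
    -- Condition (A4):
    (g' : ℝ → ℝ)
    (hg_deriv : ∀ s ∈ Set.Ioi (0 : ℝ), HasDerivAt g (g' s) s)
    (hg'_cont : ContinuousOn g' (Set.Ioi 0))
    (φ : ℝ → ℝ) (hφ : ∀ s, φ s = -s * g' s)
    (hφ_pos : ∀ s ∈ Set.Ioi (0 : ℝ), 0 < φ s)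
    (σM : ℝ) (hσM : 0 < σM)
    (hφ_mono : MonotoneOn φ (Set.Ioc 0 σM))
    (hφ_anti : AntitoneOn φ (Set.Ici σM))
    (K : ℝ) (hK : K = φ σM)
    (b : ℝ) (hb0 : 0 < b) (hb1 : b < 1)
    -- σ_{b,ε} and γ_{b,ε} as functions of ε:
    (σb γb : ℝ → ℝ)
    (hσb : ∀ ε ∈ Set.Ico (0 : ℝ) b, 0 < σb ε ∧ g (σb ε) = (b - ε) / (1 - ε))
    (hγb : ∀ ε ∈ Set.Ico (0 : ℝ) b, 0 < γb ε ∧ g (γb ε) = b / (1 - ε))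
    (c : ℝ) (hc0 : 0 < c) (hcK : c ≤ 1 / K)
    (A : ℝ → ℝ → ℝ) (hA : ∀ ε s, A ε s = c * (1 - ε) * g s + Real.log s)
    (D : ℝ → ℝ)
    (hD : ∀ ε, D ε = sInf (A ε '' Set.Ici (σb ε)) - sInf (A ε '' Set.Ici (γb ε)))
    (BS : ℝ → ℝ) (hBS : ∀ ε, BS ε = Real.sqrt ((σb ε / γb ε) ^ 2 - 1))
    (BCM : ℝ → ℝ)
    (hBCM : ∀ ε, BCM ε = Real.sqrt (Real.exp (2 * c * ε + 2 * D ε) - 1)) :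
    ∀ ε ∈ Set.Ioo (0 : ℝ) b, BCM ε = BS ε := by
  intro ε hε
  obtain ⟨hε0, hεb⟩ := hε
  have hε1 : ε < 1 := lt_trans hεb hb1
  have hεmem : ε ∈ Set.Ico (0:ℝ) b := ⟨le_of_lt hε0, hεb⟩
  obtain ⟨hσpos, hσg⟩ := hσb ε hεmem
  obtain ⟨hγpos, hγg⟩ := hγb ε hεmem
  have hKpos : 0 < K := hK ▸ hφ_pos σM (mem_Ioi.mpr hσM)
  have hφK : ∀ s, 0 < s → φ s ≤ K := by
    intro s hs
    rcases le_or_gt s σM with h | h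
    · rw [hK]; exact hφ_mono ⟨hs, h⟩ ⟨hσM, le_refl _⟩ h
    · rw [hK]; exact hφ_anti (mem_Ici.mpr (le_refl _)) (mem_Ici.mpr h.le) h.le
  set f : ℝ → ℝ := fun s => c * (1 - ε) * g s + Real.log s with hf
  have hAf : A ε = f := funext (hA ε)
  have hderiv : ∀ s ∈ Set.Ioi (0:ℝ), HasDerivAt f (c * (1 - ε) * g' s + s⁻¹) s := by
    intro s hs
    exact ((hg_deriv s hs).const_mul (c * (1 - ε))).add
      (Real.hasDerivAt_log (ne_of_gt hs))
  have hpos : ∀ s ∈ Set.Ioi (0:ℝ), 0 < c * (1 - ε) * g' s + s⁻¹ := by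
    intro s hs
    have hs0 : (0:ℝ) < s := hs
    have hφs : φ s = -s * g' s := hφ s
    have hφsK : φ s ≤ K := hφK s hs0
    have hφs0 : 0 < φ s := hφ_pos s hs
    have hcK' : c * K ≤ 1 := by
      have := mul_le_mul_of_nonneg_right hcK hKpos.le
      rwa [one_div_mul_cancel (ne_of_gt hKpos)] at this
    have hcφ : c * φ s ≤ 1 := by nlinarith
    have key : 0 < 1 - c * (1 - ε) * φ s := by nlinarith
    have heq : c * (1 - ε) * g' s + s⁻¹ = (1 - c * (1 - ε) * φ s) / s := by
      have hgs : g' s = -(φ s) / s := by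
        rw [hφs]; field_simp
      rw [hgs]; field_simp; ring
    rw [heq]
    exact div_pos key hs0
  -- f strictly monotone on Ioi 0
  have hmono : StrictMonoOn f (Set.Ioi 0) := by
    apply strictMonoOn_of_deriv_pos (convex_Ioi 0)
    · intro s hs
      exact ((hderiv s hs).differentiableAt).continuousAt.continuousWithinAt
    · intro s hs
      rw [interior_Ioi] at hs
      rw [(hderiv s hs).deriv]
      exact hpos s hs
  have hinf : ∀ x : ℝ, 0 < x → sInf (A ε '' Set.Ici x) = f x := by
    intro x hx
    rw [hAf]
    apply IsLeast.csInf_eq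
    constructor
    · exact ⟨x, le_refl x, rfl⟩
    · rintro y ⟨t, ht, rfl⟩
      rcases eq_or_lt_of_le (mem_Ici.mp ht) with h | h
      · rw [h]
      · exact (hmono (mem_Ioi.mpr hx) (mem_Ioi.mpr (lt_trans hx h)) h).le
  have hDε : D ε = Real.log (σb ε) - Real.log (γb ε) - c * ε := by
    rw [hD ε, hinf _ hσpos, hinf _ hγpos]
    simp only [hf, hσg, hγg]
    have h1ε : (1:ℝ) - ε ≠ 0 := by linarith
    field_simp
    ring
  have hexp : Real.exp (2 * c * ε + 2 * D ε) = (σb ε / γb ε) ^ 2 := by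
    rw [hDε]
    have h2 : 2 * c * ε + 2 * (Real.log (σb ε) - Real.log (γb ε) - c * ε)
        = Real.log ((σb ε / γb ε) ^ 2) := by
      rw [Real.log_pow, Real.log_div (ne_of_gt hσpos) (ne_of_gt hγpos)]
      push_cast
      ring
    rw [h2, Real.exp_log (by positivity)]
  rw [hBCM ε, hBS ε, hexp]
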